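/- Consider the smooth two-layer setting: Φ(a,b;x) = a·σ(bᵀx) with σ differentiable and positively 1-homogeneous, Φ̃ the k-neuron network, and T the splitting map with coefficients cᵢ ≥ 0, ∑cᵢ² = 1. At any point where all relevant derivatives exist (bᵀx ≠ 0), the gradient satisfies ∇_η Φ̃(Tθ; x) = T(∇_θ Φ(θ; x)). -/

import Mathlib

set_option maxHeartbeats 1000000

open InnerProductSpace

/-- Derivative of a positively 1-homogeneous function is 0-homogeneous. -/
lemma deriv_homog (σ : ℝ → ℝ)
    (hσ : ∀ c > (0:ℝ), ∀ z : ℝ, σ (c * z) = c * σ z)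
    (hσdiff : ∀ z : ℝ, z ≠ 0 → DifferentiableAt ℝ σ z)
    {c s : ℝ} (hc : 0 < c) (hs : s ≠ 0) :
    deriv σ (c * s) = deriv σ s := by
  have hcs : c * s ≠ 0 := mul_ne_zero hc.ne' hs
  have h1 : HasDerivAt (fun z => σ (c * z)) (deriv σ (c * s) * c) s := by
    have hg : HasDerivAt (fun z : ℝ => c * z) c s := by
      simpa using (hasDerivAt_id s).const_mul c
    exact ((hσdiff (c * s) hcs).hasDerivAt).comp s hg
  have h2 : HasDerivAt (fun z => σ (c * z)) (c * deriv σ s) s := by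
    have : (fun z => σ (c * z)) = fun z => c * σ z := by
      funext z; exact hσ c hc z
    rw [this]
    exact ((hσdiff s hs).hasDerivAt).const_mul c
  have h3 := h1.unique h2
  have h4 : deriv σ (c * s) * c = deriv σ s * c := by linarith [h3]
  exact mul_right_cancel₀ hc.ne' h4

/-- fderiv of a single neuron. -/
lemma neuron_fderiv {d : ℕ} {ι : Type*} [Fintype ι] [DecidableEq ι]
    (σ : ℝ → ℝ) (hσdiff : ∀ z : ℝ, z ≠ 0 → DifferentiableAt ℝ σ z)
    (x : Fin d → ℝ) (P : ι) (Q : Fin d → ι) (η : EuclideanSpace ℝ ι)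
    (hs : (∑ j, η (Q j) * x j) ≠ 0) :
    HasFDerivAt (fun η : EuclideanSpace ℝ ι => η P * σ (∑ j, η (Q j) * x j))
      ((η P * deriv σ (∑ j, η (Q j) * x j)) • (∑ j, x j • EuclideanSpace.proj (Q j))
        + σ (∑ j, η (Q j) * x j) • (EuclideanSpace.proj P :
            EuclideanSpace ℝ ι →L[ℝ] ℝ)) η := by
  let L : EuclideanSpace ℝ ι →L[ℝ] ℝ := ∑ j, x j • EuclideanSpace.proj (Q j)
  have hL : ∀ v : EuclideanSpace ℝ ι, L v = ∑ j, v (Q j) * x j := by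
    intro v
    simp only [L, ContinuousLinearMap.sum_apply, ContinuousLinearMap.smul_apply,
      smul_eq_mul]
    exact Finset.sum_congr rfl fun j _ => mul_comm _ _
  have hfun : (fun η : EuclideanSpace ℝ ι => η P * σ (∑ j, η (Q j) * x j))
      = fun η => (EuclideanSpace.proj P : EuclideanSpace ℝ ι →L[ℝ] ℝ) η * σ (L η) := by
    funext v; rw [hL]; rfl
  rw [hfun]
  have hP : HasFDerivAt (fun η : EuclideanSpace ℝ ι =>
        (EuclideanSpace.proj P : EuclideanSpace ℝ ι →L[ℝ] ℝ) η)
      (EuclideanSpace.proj P : EuclideanSpace ℝ ι →L[ℝ] ℝ) η :=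
    ContinuousLinearMap.hasFDerivAt _
  have hLd : HasFDerivAt (fun η : EuclideanSpace ℝ ι => L η) L η :=
    ContinuousLinearMap.hasFDerivAt L
  have hσL : HasFDerivAt (fun η : EuclideanSpace ℝ ι => σ (L η))
      (deriv σ (L η) • L) η := by
    have hd : HasDerivAt σ (deriv σ (L η)) (L η) := by
      refine (hσdiff (L η) ?_).hasDerivAt
      rw [hL]; exact hs
    exact hd.comp_hasFDerivAt η hLd
  have := hP.mul hσL
  have hLη : L η = ∑ j, η (Q j) * x j := hL η
  rw [hLη] at this
  refine this.congr_fderiv ?_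
  rw [smul_smul]; rfl

/-- In the smooth two-layer setting, at points where `bᵀx ≠ 0`
(with all splitting coefficients positive), the gradient of the split network
at `Tθ` equals `T` applied to the gradient of the original network at `θ`. -/
theorem two_layer_splitting_gradient_preserving (d k : ℕ) (σ : ℝ → ℝ)
    (hσ : ∀ c > (0:ℝ), ∀ z : ℝ, σ (c * z) = c * σ z)
    (hσdiff : ∀ z : ℝ, z ≠ 0 → DifferentiableAt ℝ σ z)
    (c : Fin k → ℝ) (hc : ∀ i, 0 < c i) (hc2 : ∑ i, (c i) ^ 2 = 1)
    (x : Fin d → ℝ)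
    (Φ : EuclideanSpace ℝ (Unit ⊕ Fin d) → ℝ)
    (hΦ : ∀ θ, Φ θ = θ (Sum.inl ()) * σ (∑ j, θ (Sum.inr j) * x j))
    (Φtil : EuclideanSpace ℝ (Fin k ⊕ Fin k × Fin d) → ℝ)
    (hΦtil : ∀ η, Φtil η = ∑ i, η (Sum.inl i) * σ (∑ j, η (Sum.inr (i, j)) * x j))
    (T : EuclideanSpace ℝ (Unit ⊕ Fin d) →ₗ[ℝ]
         EuclideanSpace ℝ (Fin k ⊕ Fin k × Fin d))
    (hT : ∀ θ, (∀ i : Fin k, T θ (Sum.inl i) = c i * θ (Sum.inl ())) ∧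
      (∀ (i : Fin k) (j : Fin d), T θ (Sum.inr (i, j)) = c i * θ (Sum.inr j)))
    (θ : EuclideanSpace ℝ (Unit ⊕ Fin d))
    (hbx : (∑ j, θ (Sum.inr j) * x j) ≠ 0) :
    gradient Φtil (T θ) = T (gradient Φ θ) := by
  classical
  set s : ℝ := ∑ j, θ (Sum.inr j) * x j with hs
  set a : ℝ := θ (Sum.inl ()) with ha
  set D : ℝ := deriv σ s with hD
  -- the gradient of Φ at θ
  let g : EuclideanSpace ℝ (Unit ⊕ Fin d) :=
    WithLp.toLp 2 (fun m => Sum.elim (fun _ : Unit => σ s) (fun j => a * D * x j) m)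
  have hgrad : HasGradientAt Φ g θ := by
    rw [hasGradientAt_iff_hasFDerivAt]
    have h1 := neuron_fderiv σ hσdiff x (Sum.inl ()) Sum.inr θ hbx
    have hfun : Φ = fun η : EuclideanSpace ℝ (Unit ⊕ Fin d) =>
        η (Sum.inl ()) * σ (∑ j, η (Sum.inr j) * x j) := funext hΦ
    rw [hfun]
    have heq : (InnerProductSpace.toDual ℝ (EuclideanSpace ℝ (Unit ⊕ Fin d)) g :
        EuclideanSpace ℝ (Unit ⊕ Fin d) →L[ℝ] ℝ)
        = (a * D) • (∑ j, x j • EuclideanSpace.proj (Sum.inr j :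
              Unit ⊕ Fin d)) + σ s • (EuclideanSpace.proj (Sum.inl () : Unit ⊕ Fin d) :
              EuclideanSpace ℝ (Unit ⊕ Fin d) →L[ℝ] ℝ) := by
      apply ContinuousLinearMap.ext
      intro v
      rw [InnerProductSpace.toDual_apply_apply]
      simp only [PiLp.inner_apply, RCLike.inner_apply, conj_trivial,
        ContinuousLinearMap.add_apply, ContinuousLinearMap.smul_apply,
        ContinuousLinearMap.sum_apply, smul_eq_mul]
      rw [Fintype.sum_sum_type]
      simp only [g, PiLp.toLp_apply, Sum.elim_inl, Sum.elim_inr, Finset.univ_unique, Finset.sum_singleton]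
      have e1 : ∀ j : Fin d, (EuclideanSpace.proj (Sum.inr j : Unit ⊕ Fin d) :
          EuclideanSpace ℝ (Unit ⊕ Fin d) →L[ℝ] ℝ) v = v (Sum.inr j) := fun _ => rfl
      have e2 : (EuclideanSpace.proj (Sum.inl () : Unit ⊕ Fin d) :
          EuclideanSpace ℝ (Unit ⊕ Fin d) →L[ℝ] ℝ) v = v (Sum.inl ()) := rfl
      simp only [e1, e2]
      rw [Finset.mul_sum, add_comm]
      congr 1
      exact Finset.sum_congr rfl fun j _ => by ring
      exact mul_comm _ _
    rw [heq]
    exact h1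
  -- the gradient of Φtil at T θ
  obtain ⟨hT1, hT2⟩ := hT θ
  have hsi : ∀ i : Fin k, (∑ j, (T θ) (Sum.inr (i, j)) * x j) = c i * s := by
    intro i
    rw [hs, Finset.mul_sum]
    exact Finset.sum_congr rfl fun j _ => by rw [hT2 i j]; ring
  let gt : EuclideanSpace ℝ (Fin k ⊕ Fin k × Fin d) :=
    WithLp.toLp 2 (fun m => Sum.elim (fun i => c i * σ s) (fun p : Fin k × Fin d =>
      c p.1 * a * D * x p.2) m)
  have hgradt : HasGradientAt Φtil gt (T θ) := by
    rw [hasGradientAt_iff_hasFDerivAt]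
    have hfun : Φtil = fun η : EuclideanSpace ℝ (Fin k ⊕ Fin k × Fin d) =>
        ∑ i, η (Sum.inl i) * σ (∑ j, η (Sum.inr (i, j)) * x j) := funext hΦtil
    rw [hfun]
    have h2 : HasFDerivAt (fun η : EuclideanSpace ℝ (Fin k ⊕ Fin k × Fin d) =>
        ∑ i, η (Sum.inl i) * σ (∑ j, η (Sum.inr (i, j)) * x j))
        (∑ i, (((T θ) (Sum.inl i) * deriv σ (∑ j, (T θ) (Sum.inr (i, j)) * x j)) •
            (∑ j, x j • EuclideanSpace.proj (Sum.inr (i, j) : Fin k ⊕ Fin k × Fin d))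
          + σ (∑ j, (T θ) (Sum.inr (i, j)) * x j) •
            (EuclideanSpace.proj (Sum.inl i : Fin k ⊕ Fin k × Fin d) :
              EuclideanSpace ℝ (Fin k ⊕ Fin k × Fin d) →L[ℝ] ℝ))) (T θ) := by
      apply HasFDerivAt.fun_sum
      intro i _
      exact neuron_fderiv σ hσdiff x (Sum.inl i) (fun j => Sum.inr (i, j)) (T θ)
        (by rw [hsi i]; exact mul_ne_zero (hc i).ne' hbx)
    have heq : (InnerProductSpace.toDual ℝ (EuclideanSpace ℝ (Fin k ⊕ Fin k × Fin d)) gt :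
        EuclideanSpace ℝ (Fin k ⊕ Fin k × Fin d) →L[ℝ] ℝ)
        = ∑ i, (((T θ) (Sum.inl i) * deriv σ (∑ j, (T θ) (Sum.inr (i, j)) * x j)) •
            (∑ j, x j • EuclideanSpace.proj (Sum.inr (i, j) : Fin k ⊕ Fin k × Fin d))
          + σ (∑ j, (T θ) (Sum.inr (i, j)) * x j) •
            (EuclideanSpace.proj (Sum.inl i : Fin k ⊕ Fin k × Fin d) :
              EuclideanSpace ℝ (Fin k ⊕ Fin k × Fin d) →L[ℝ] ℝ)) := by
      apply ContinuousLinearMap.ext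
      intro v
      rw [InnerProductSpace.toDual_apply_apply]
      simp only [PiLp.inner_apply, RCLike.inner_apply, conj_trivial,
        ContinuousLinearMap.add_apply, ContinuousLinearMap.smul_apply,
        ContinuousLinearMap.sum_apply, smul_eq_mul]
      rw [Fintype.sum_sum_type, Fintype.sum_prod_type]
      simp only [gt, PiLp.toLp_apply, Sum.elim_inl, Sum.elim_inr]
      have key : ∀ i : Fin k,
          (T θ) (Sum.inl i) * deriv σ (∑ j, (T θ) (Sum.inr (i, j)) * x j) = c i * a * D := by
        intro i
        rw [hsi i, hT1 i, ← ha, hD, deriv_homog σ hσ hσdiff (hc i) hbx]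
      have key2 : ∀ i : Fin k, σ (∑ j, (T θ) (Sum.inr (i, j)) * x j) = c i * σ s := by
        intro i
        rw [hsi i, hσ (c i) (hc i) s]
      rw [← Finset.sum_add_distrib]
      refine Finset.sum_congr rfl fun i _ => ?_
      rw [key i, key2 i, Finset.mul_sum]
      have e1 : ∀ j : Fin d, (EuclideanSpace.proj (Sum.inr (i, j) : Fin k ⊕ Fin k × Fin d) :
          EuclideanSpace ℝ (Fin k ⊕ Fin k × Fin d) →L[ℝ] ℝ) v = v (Sum.inr (i, j)) :=
        fun _ => rfl
      have e2 : (EuclideanSpace.proj (Sum.inl i : Fin k ⊕ Fin k × Fin d) :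
          EuclideanSpace ℝ (Fin k ⊕ Fin k × Fin d) →L[ℝ] ℝ) v = v (Sum.inl i) := rfl
      simp only [e1, e2]
      rw [add_comm]
      congr 1
      exact Finset.sum_congr rfl fun j _ => by ring
      exact mul_comm _ _
    rw [heq]
    exact h2
  rw [hgradt.gradient, hgrad.gradient]
  ext m
  obtain ⟨hT1', hT2'⟩ := hT g
  match m with
  | Sum.inl i => rw [hT1' i]; simp [gt, g]
  | Sum.inr (i, j) => rw [hT2' i j]; simp [gt, g]; ring
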